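/- (Word of mouth, τ > 1, stability of the second equilibrium) Let ε > 0, λ₂ > 0, λ₁ = λ₃ = λ₄ = λ₅ = λ₇ = 0, γ > 0, α > 0 and τ > 1. Let R₂* = αγ(1−1/τ)/ε, C₂* = α(1−α)λ₂γ²(1−1/τ)/(ε²(ε+β₁+λ₂R₂*)), P_{C,2}* = (1−α)γ(ε+β₁)/(ε(ε+β₁+λ₂R₂*)) and P_{R,2}* = (ε+β₂)/(λ₂+m_Rλ₆). Then the Jacobian matrix of the model at this equilibrium, J = [[−ε−β₁, λ₂P_{C,2}*, λ₂R₂*, 0], [0, 0, 0, (λ₂+m_Rλ₆)R₂*], [β₁, −λ₂P_{C,2}*, −ε−λ₂R₂*, 0], [0, −ε, 0, −ε−(λ₂+m_Rλ₆)R₂*]] (in the coordinate order (C, R, P_C, P_R)), has all of its complex eigenvalues with negative real part. -/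

import Mathlib

open Real Filter Topology

/-- The customer-dynamics model: `(C, R, PC, PR)` solves the system on `[t0, ∞)`. -/
def IsSolution (l1 l2 l3 l4 l5 l6 l7 b1 b2 eps gam m mR al t0 : ℝ)
    (C R PC PR : ℝ → ℝ) : Prop :=
  ∀ t : ℝ, t0 ≤ t →
    HasDerivAt C (l7 * R t - (eps + b1 + l5) * C t + (l1 + m * l4) * PC t
      + l2 * R t * PC t) t ∧
    HasDerivAt R (l5 * C t - (eps + b2 + l7) * R t + (l3 + m * l4) * PR t
      + (l2 + mR * l6) * R t * PR t) t ∧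
    HasDerivAt PC ((1 - al) * gam + b1 * C t + l7 * PR t - (eps + l5 + l1 + m * l4) * PC t
      - l2 * R t * PC t) t ∧
    HasDerivAt PR (al * gam + b2 * R t + l5 * PC t - (eps + l7 + l3 + m * l4) * PR t
      - (l2 + mR * l6) * R t * PR t) t

/-- An equilibrium of the customer-dynamics model: all four right-hand sides vanish. -/
def IsEquilibrium (l1 l2 l3 l4 l5 l6 l7 b1 b2 eps gam m mR al : ℝ)
    (C R PC PR : ℝ) : Prop :=
  l7 * R - (eps + b1 + l5) * C + (l1 + m * l4) * PC + l2 * R * PC = 0 ∧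
  l5 * C - (eps + b2 + l7) * R + (l3 + m * l4) * PR + (l2 + mR * l6) * R * PR = 0 ∧
  (1 - al) * gam + b1 * C + l7 * PR - (eps + l5 + l1 + m * l4) * PC - l2 * R * PC = 0 ∧
  al * gam + b2 * R + l5 * PC - (eps + l7 + l3 + m * l4) * PR - (l2 + mR * l6) * R * PR = 0

theorem word_of_mouth_second_equilibrium_stability (l1 l2 l3 l4 l5 l6 l7 b1 b2 eps gam m mR al : ℝ) (tau Cs Rs PCs PRs : ℝ)
    (J : Matrix (Fin 4) (Fin 4) ℂ)
    (hl1 : 0 ≤ l1) (hl2 : 0 ≤ l2) (hl3 : 0 ≤ l3) (hl4 : 0 ≤ l4) (hl5 : 0 ≤ l5)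
    (hl6 : 0 ≤ l6) (hl7 : 0 ≤ l7) (hb1 : 0 ≤ b1) (hb2 : 0 ≤ b2) (heps0 : 0 ≤ eps)
    (hgam : 0 ≤ gam) (hm : 0 ≤ m) (hmR : 0 ≤ mR) (hal0 : 0 ≤ al) (hal1 : al ≤ 1)
    (heps : 0 < eps) (hl2pos : 0 < l2)
    (hl1 : l1 = 0) (hl3 : l3 = 0) (hl4 : l4 = 0) (hl5 : l5 = 0) (hl7 : l7 = 0)
    (hgampos : 0 < gam) (halpos : 0 < al)
    (htau : tau = al * gam * (l2 + mR * l6) / (eps * (eps + b2)))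
    (htau1 : 1 < tau)
    (hRs : Rs = al * gam * (1 - 1 / tau) / eps)
    (hCs : Cs = al * (1 - al) * l2 * gam ^ 2 * (1 - 1 / tau)
      / (eps ^ 2 * (eps + b1 + l2 * Rs)))
    (hPCs : PCs = (1 - al) * gam * (eps + b1) / (eps * (eps + b1 + l2 * Rs)))
    (hPRs : PRs = (eps + b2) / (l2 + mR * l6))
    (hJ : J = !![((-eps - b1 : ℝ) : ℂ), ((l2 * PCs : ℝ) : ℂ), ((l2 * Rs : ℝ) : ℂ), 0;
      0, 0, 0, (((l2 + mR * l6) * Rs : ℝ) : ℂ);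
      ((b1 : ℝ) : ℂ), ((-(l2 * PCs) : ℝ) : ℂ), ((-eps - l2 * Rs : ℝ) : ℂ), 0;
      0, ((-eps : ℝ) : ℂ), 0, ((-eps - (l2 + mR * l6) * Rs : ℝ) : ℂ)]) :
    ∀ μ ∈ spectrum ℂ J, μ.re < 0 := by
  -- positivity facts
  have htaupos : 0 < tau := lt_trans one_pos htau1
  have h1t : 0 < 1 - 1 / tau := by
    have : 1 / tau < 1 := by
      rw [div_lt_one htaupos]; exact htau1
    linarith
  have hRspos : 0 < Rs := by
    rw [hRs]
    exact div_pos (mul_pos (mul_pos halpos hgampos) h1t) heps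
  have hkpos : 0 < (l2 + mR * l6) * Rs :=
    mul_pos (lt_of_lt_of_le hl2pos (le_add_of_nonneg_right (mul_nonneg hmR hl6))) hRspos
  intro mu hmu
  rw [spectrum.mem_iff] at hmu
  have hdet : (algebraMap ℂ (Matrix (Fin 4) (Fin 4) ℂ) mu - J).det = 0 := by
    by_contra h
    exact hmu ((Matrix.isUnit_iff_isUnit_det _).mpr (isUnit_iff_ne_zero.mpr h))
  rw [hJ] at hdet
  have hM : algebraMap ℂ (Matrix (Fin 4) (Fin 4) ℂ) mu -
      !![((-eps - b1 : ℝ) : ℂ), ((l2 * PCs : ℝ) : ℂ), ((l2 * Rs : ℝ) : ℂ), 0;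
      0, 0, 0, (((l2 + mR * l6) * Rs : ℝ) : ℂ);
      ((b1 : ℝ) : ℂ), ((-(l2 * PCs) : ℝ) : ℂ), ((-eps - l2 * Rs : ℝ) : ℂ), 0;
      0, ((-eps : ℝ) : ℂ), 0, ((-eps - (l2 + mR * l6) * Rs : ℝ) : ℂ)] =
      !![mu + (eps : ℂ) + b1, -((l2 : ℂ) * PCs), -((l2 : ℂ) * Rs), 0;
      0, mu, 0, -(((l2 : ℂ) + mR * l6) * Rs);
      -(b1 : ℂ), (l2 : ℂ) * PCs, mu + eps + l2 * Rs, 0;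
      0, (eps : ℂ), 0, mu + eps + ((l2 : ℂ) + mR * l6) * Rs] := by
    ext i j
    fin_cases i <;> fin_cases j <;>
      simp [Matrix.algebraMap_matrix_apply] <;> push_cast <;> ring
  rw [hM] at hdet
  simp [Matrix.det_succ_row_zero, Fin.sum_univ_succ, Fin.succAbove] at hdet
  have hfac : (mu + (eps : ℂ)) * (mu + (eps : ℂ)) *
      (mu + ((eps : ℂ) + b1 + l2 * Rs)) * (mu + ((l2 : ℂ) + mR * l6) * Rs) = 0 := by
    linear_combination hdet
  have hre : ∀ x : ℝ, 0 < x → mu + (x : ℂ) = 0 → mu.re < 0 := by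
    intro x hx h
    have : mu = -(x : ℂ) := by linear_combination h
    rw [this]
    simpa using hx
  rcases mul_eq_zero.mp hfac with h | h
  · rcases mul_eq_zero.mp h with h | h
    · rcases mul_eq_zero.mp h with h | h
      · exact hre eps heps h
      · exact hre eps heps h
    · have := hre (eps + b1 + l2 * Rs)
        (by positivity) (by push_cast at h ⊢; linear_combination h)
      exact this
  · exact hre ((l2 + mR * l6) * Rs) hkpos (by push_cast at h ⊢; linear_combination h)
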